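/- Let F be a field with characteristic greater than n (or zero), and β ∈ F with β ∉ {0,...,n}. The unique multilinear polynomial f agreeing with 1/(∑_{i=1}^n x_i − β) on {0,1}^n has exactly 2^n monomials with nonzero coefficients (i.e., every coefficient of every multilinear monomial is nonzero). -/

import Mathlib

open MvPolynomial Finset

section Aux

variable {F : Type*} [Field F]

/-- Möbius-type inversion over powersets. -/
lemma aux_inv {α : Type*} [DecidableEq α] (U : Finset α) (a : Finset α → F) :
    ∑ S ∈ U.powerset, ∑ T ∈ S.powerset, (-1:F) ^ ((S \ T).card) * a T = a U := by
  classical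
  induction U using Finset.induction_on generalizing a with
  | empty => simp
  | insert _ _ hx =>
    rename_i x U ih
    rw [Finset.sum_powerset_insert hx]
    have h1 : ∀ S ∈ U.powerset,
        ∑ T ∈ (insert x S).powerset, (-1:F) ^ (((insert x S) \ T).card) * a T =
        -(∑ T ∈ S.powerset, (-1:F) ^ ((S \ T).card) * a T) +
          ∑ T ∈ S.powerset, (-1:F) ^ ((S \ T).card) * a (insert x T) := by
      intro S hS
      rw [Finset.mem_powerset] at hS
      have hxS : x ∉ S := fun h => hx (hS h)
      rw [Finset.sum_powerset_insert hxS, ← Finset.sum_neg_distrib]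
      congr 1
      · refine Finset.sum_congr rfl fun T hT => ?_
        rw [Finset.mem_powerset] at hT
        have hxT : x ∉ T := fun h => hxS (hT h)
        have : insert x S \ T = insert x (S \ T) := by
          ext y; simp only [Finset.mem_sdiff, Finset.mem_insert]; aesop
        rw [this, Finset.card_insert_of_notMem (by simp [hxS])]
        ring
      · refine Finset.sum_congr rfl fun T hT => ?_
        have : insert x S \ insert x T = S \ T := by
          ext y
          simp only [Finset.mem_sdiff, Finset.mem_insert]
          constructor
          · rintro ⟨rfl | hy1, hy2⟩
            · exact absurd (Or.inl rfl) hy2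
            · exact ⟨hy1, fun hT' => hy2 (Or.inr hT')⟩
          · rintro ⟨hy1, hy2⟩
            refine ⟨Or.inr hy1, ?_⟩
            rintro (rfl | hyT)
            · exact hxS hy1
            · exact hy2 hyT
        rw [this]
    rw [Finset.sum_congr rfl h1, Finset.sum_add_distrib, Finset.sum_neg_distrib,
      ih (fun T => a (insert x T))]
    ring

lemma aux_formula {α : Type*} [DecidableEq α] (S : Finset α) :
    ∀ b : F, (∀ j : ℕ, j ≤ S.card → b ≠ (j : F)) →
      ∑ T ∈ S.powerset, (-1:F) ^ ((S \ T).card) * ((T.card : F) - b)⁻¹ =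
        -((Nat.factorial S.card : ℕ) : F) * (∏ j ∈ Finset.range (S.card + 1), (b - (j : F)))⁻¹ := by
  classical
  induction S using Finset.induction_on with
  | empty =>
    intro b hb
    rw [Finset.powerset_empty, Finset.sum_singleton]
    simp [Nat.factorial, zero_sub, inv_neg]
  | insert _ _ hx =>
    rename_i x S ih
    intro b hb
    rw [Finset.card_insert_of_notMem hx] at hb ⊢
    set s := S.card with hs
    have hb' : ∀ j : ℕ, j ≤ s → b ≠ (j : F) := fun j hj => hb j (le_trans hj (Nat.le_succ s))
    have hb1 : ∀ j : ℕ, j ≤ s → b - 1 ≠ (j : F) := by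
      intro j hj h
      apply hb (j + 1) (by omega)
      have hb2 : b = (j : F) + 1 := by rw [← h]; ring
      rw [hb2]; push_cast; ring
    -- split powerset
    rw [Finset.sum_powerset_insert hx]
    have h1 : ∑ T ∈ S.powerset, (-1:F) ^ ((insert x S \ T).card) * ((T.card : F) - b)⁻¹ =
        -∑ T ∈ S.powerset, (-1:F) ^ ((S \ T).card) * ((T.card : F) - b)⁻¹ := by
      rw [← Finset.sum_neg_distrib]
      refine Finset.sum_congr rfl fun T hT => ?_
      rw [Finset.mem_powerset] at hT
      have hxT : x ∉ T := fun h => hx (hT h)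
      have hset : insert x S \ T = insert x (S \ T) := by
        ext y
        simp only [Finset.mem_sdiff, Finset.mem_insert]
        constructor
        · rintro ⟨rfl | hy1, hy2⟩
          · exact Or.inl rfl
          · exact Or.inr ⟨hy1, hy2⟩
        · rintro (rfl | ⟨hy1, hy2⟩)
          · exact ⟨Or.inl rfl, hxT⟩
          · exact ⟨Or.inr hy1, hy2⟩
      rw [hset, Finset.card_insert_of_notMem (by simp [hx])]
      ring
    have h2 : ∑ T ∈ S.powerset, (-1:F) ^ ((insert x S \ insert x T).card) *
          (((insert x T).card : F) - b)⁻¹ =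
        ∑ T ∈ S.powerset, (-1:F) ^ ((S \ T).card) * ((T.card : F) - (b - 1))⁻¹ := by
      refine Finset.sum_congr rfl fun T hT => ?_
      rw [Finset.mem_powerset] at hT
      have hxT : x ∉ T := fun h => hx (hT h)
      have hset : insert x S \ insert x T = S \ T := by
        ext y
        simp only [Finset.mem_sdiff, Finset.mem_insert]
        constructor
        · rintro ⟨rfl | hy1, hy2⟩
          · exact absurd (Or.inl rfl) hy2
          · exact ⟨hy1, fun hT' => hy2 (Or.inr hT')⟩
        · rintro ⟨hy1, hy2⟩
          refine ⟨Or.inr hy1, ?_⟩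
          rintro (rfl | hyT)
          · exact hx hy1
          · exact hy2 hyT
      rw [hset, Finset.card_insert_of_notMem hxT]
      push_cast
      ring_nf
    rw [h1, h2, ih b hb', ih (b - 1) hb1]
    -- now pure field algebra
    set P : F := ∏ j ∈ Finset.range (s + 1), (b - (j : F)) with hP
    set Q : F := ∏ j ∈ Finset.range (s + 1), ((b - 1) - (j : F)) with hQ
    set P₂ : F := ∏ j ∈ Finset.range (s + 1 + 1), (b - (j : F)) with hP2
    have hPne : P ≠ 0 := by
      rw [hP, Finset.prod_ne_zero_iff]
      intro j hj
      rw [Finset.mem_range] at hj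
      exact sub_ne_zero_of_ne (hb' j (by omega))
    have hQne : Q ≠ 0 := by
      rw [hQ, Finset.prod_ne_zero_iff]
      intro j hj
      rw [Finset.mem_range] at hj
      exact sub_ne_zero_of_ne (hb1 j (by omega))
    have hP2ne : P₂ ≠ 0 := by
      rw [hP2, Finset.prod_ne_zero_iff]
      intro j hj
      rw [Finset.mem_range] at hj
      exact sub_ne_zero_of_ne (hb j (by omega))
    have e1 : P₂ = P * (b - ((s : F) + 1)) := by
      rw [hP2, hP, Finset.prod_range_succ]
      push_cast
      ring
    have e2 : P₂ = Q * b := by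
      rw [hP2, hQ, Finset.prod_range_succ']
      congr 1
      · refine Finset.prod_congr rfl fun j hj => ?_
        push_cast
        ring
      · simp
    refine mul_right_cancel₀ hP2ne ?_
    have k1 : P⁻¹ * P₂ = b - ((s : F) + 1) := by
      rw [e1, ← mul_assoc, inv_mul_cancel₀ hPne, one_mul]
    have k2 : Q⁻¹ * P₂ = b := by
      rw [e2, ← mul_assoc, inv_mul_cancel₀ hQne, one_mul]
    have k3 : P₂⁻¹ * P₂ = 1 := inv_mul_cancel₀ hP2ne
    calc (-(-((Nat.factorial s : ℕ) : F) * P⁻¹) + -((Nat.factorial s : ℕ) : F) * Q⁻¹) * P₂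
        = ((Nat.factorial s : ℕ) : F) * (P⁻¹ * P₂)
            - ((Nat.factorial s : ℕ) : F) * (Q⁻¹ * P₂) := by ring
      _ = ((Nat.factorial s : ℕ) : F) * (b - ((s : F) + 1))
            - ((Nat.factorial s : ℕ) : F) * b := by rw [k1, k2]
      _ = -((Nat.factorial (s+1) : ℕ) : F) * 1 := by
          rw [Nat.factorial_succ]
          push_cast
          ring
      _ = -((Nat.factorial (s+1) : ℕ) : F) * (P₂⁻¹ * P₂) := by rw [k3]
      _ = -((Nat.factorial (s+1) : ℕ) : F) * P₂⁻¹ * P₂ := by ring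

lemma cast_factorial_ne_zero (p n : ℕ) [CharP F p] (hp : p = 0 ∨ n < p)
    {k : ℕ} (hk : k ≤ n) : ((Nat.factorial k : ℕ) : F) ≠ 0 := by
  intro h
  rw [CharP.cast_eq_zero_iff F p] at h
  rcases hp with rfl | hnp
  · exact absurd (zero_dvd_iff.mp h) (Nat.factorial_ne_zero k)
  · rcases CharP.char_is_prime_or_zero F p with hpr | rfl
    · have hle := (Nat.Prime.dvd_factorial hpr).mp h
      omega
    · omega

def indFinsupp {n : ℕ} (S : Finset (Fin n)) : Fin n →₀ ℕ :=
  ⟨S, fun i => if i ∈ S then 1 else 0, by intro a; simp⟩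

lemma indFinsupp_apply {n : ℕ} (S : Finset (Fin n)) (i : Fin n) :
    indFinsupp S i = if i ∈ S then 1 else 0 := rfl

lemma indFinsupp_support {n : ℕ} (S : Finset (Fin n)) :
    (indFinsupp S).support = S := rfl

lemma indFinsupp_injective {n : ℕ} : Function.Injective (@indFinsupp n) := by
  intro S T h
  have := congrArg Finsupp.support h
  rwa [indFinsupp_support, indFinsupp_support] at this

/-- A "multilinear" multivariate polynomial vanishing on the boolean cube is zero. -/
lemma ml_eq_zero {n : ℕ} (h : MvPolynomial (Fin n) F)
    (hsupp : ∀ d ∈ h.support, ∀ i, d i ≤ 1)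
    (hev : ∀ U : Finset (Fin n),
      eval (fun i => if i ∈ U then (1:F) else 0) h = 0) :
    h = 0 := by
  classical
  by_contra hne
  have hne' : h.support.Nonempty := by
    rwa [Finset.nonempty_iff_ne_empty, Ne, MvPolynomial.support_eq_empty]
  obtain ⟨d₀, hd₀, hmin⟩ := Finset.exists_min_image h.support (fun d => d.support.card) hne'
  have heval := hev d₀.support
  rw [MvPolynomial.eval_eq] at heval
  have hterm : ∀ d ∈ h.support,
      (h.coeff d * ∏ i ∈ d.support, (if i ∈ d₀.support then (1:F) else 0) ^ d i)
        = if d = d₀ then h.coeff d₀ else 0 := by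
    intro d hd
    by_cases hsub : d.support ⊆ d₀.support
    · have hcards : d₀.support.card ≤ d.support.card := hmin d hd
      have hseq : d.support = d₀.support := Finset.eq_of_subset_of_card_le hsub hcards
      have hdd : d = d₀ := by
        ext i
        by_cases hmem : i ∈ d.support
        · have h1 : d i ≤ 1 := hsupp d hd i
          have h2 : d₀ i ≤ 1 := hsupp d₀ hd₀ i
          have h3 : d i ≠ 0 := Finsupp.mem_support_iff.mp hmem
          have h4 : d₀ i ≠ 0 := Finsupp.mem_support_iff.mp (hseq ▸ hmem)
          omega
        · have h3 : d i = 0 := Finsupp.notMem_support_iff.mp hmem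
          have h4 : d₀ i = 0 := Finsupp.notMem_support_iff.mp (fun hc => hmem (hseq ▸ hc))
          omega
      subst hdd
      rw [if_pos rfl]
      have hone : ∏ i ∈ d.support, ((if i ∈ d.support then (1:F) else 0) ^ d i) = 1 :=
        Finset.prod_eq_one fun i hi => by rw [if_pos hi, one_pow]
      rw [hseq] at hone ⊢
      rw [hone, mul_one]
    · obtain ⟨i, hiS, hiU⟩ := Finset.not_subset.mp hsub
      have hne2 : d ≠ d₀ := by rintro rfl; exact hiU hiS
      rw [if_neg hne2]
      have hzero : ((if i ∈ d₀.support then (1:F) else 0) ^ d i) = 0 := by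
        rw [if_neg hiU, zero_pow (Finsupp.mem_support_iff.mp hiS)]
      rw [Finset.prod_eq_zero hiS hzero, mul_zero]
  rw [Finset.sum_congr rfl hterm, Finset.sum_ite_eq' h.support d₀ (fun _ => h.coeff d₀),
    if_pos hd₀] at heval
  exact (MvPolynomial.mem_support_iff.mp hd₀) heval

end Aux

/-- Over a field of characteristic `0` or `> n`, with `β ∉ {0,…,n}`, the (unique) multilinear
polynomial agreeing with `1/(∑ xᵢ − β)` on `{0,1}ⁿ` has exactly `2ⁿ` monomials. -/
theorem stmt10 {F : Type*} [Field F] (n : ℕ) (p : ℕ) [CharP F p] (hp : p = 0 ∨ n < p)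
    (β : F) (hβ : ∀ k : ℕ, k ≤ n → β ≠ (k : F))
    (f : MvPolynomial (Fin n) F)
    (hml : ∀ i : Fin n, MvPolynomial.degreeOf i f ≤ 1)
    (hagree : ∀ x : Fin n → F, (∀ i, x i = 0 ∨ x i = 1) →
      MvPolynomial.eval x f = ((∑ i : Fin n, x i) - β)⁻¹) :
    f.support.card = 2 ^ n := by
  classical
  -- the target coefficients and polynomial
  set a : Finset (Fin n) → F := fun T => ((T.card : F) - β)⁻¹ with ha
  set c : Finset (Fin n) → F :=
    fun S => ∑ T ∈ S.powerset, (-1:F) ^ ((S \ T).card) * a T with hc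
  set g : MvPolynomial (Fin n) F :=
    ∑ S : Finset (Fin n), monomial (indFinsupp S) (c S) with hg
  have hcardle : ∀ S : Finset (Fin n), S.card ≤ n := by
    intro S
    simpa using Finset.card_le_univ S
  -- each coefficient is nonzero
  have hcne : ∀ S : Finset (Fin n), c S ≠ 0 := by
    intro S
    rw [hc]
    simp only
    rw [aux_formula S β (fun j hj => hβ j (le_trans hj (hcardle S)))]
    apply mul_ne_zero
    · exact neg_ne_zero.mpr (cast_factorial_ne_zero p n hp (hcardle S))
    · apply inv_ne_zero
      rw [Finset.prod_ne_zero_iff]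
      intro j hj
      rw [Finset.mem_range] at hj
      exact sub_ne_zero_of_ne (hβ j (by have := hcardle S; omega))
  -- coefficients of g
  have hcoeff : ∀ S : Finset (Fin n), coeff (indFinsupp S) g = c S := by
    intro S
    rw [hg, MvPolynomial.coeff_sum, Finset.sum_eq_single S]
    · rw [coeff_monomial, if_pos rfl]
    · intro S' _ hne
      rw [coeff_monomial, if_neg (fun h => hne (indFinsupp_injective h))]
    · intro hS
      exact absurd (Finset.mem_univ S) hS
  -- support of g
  have hsuppg : g.support = Finset.univ.image (@indFinsupp n) := by
    apply Finset.Subset.antisymm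
    · intro d hd
      rw [hg] at hd
      obtain ⟨S, _, hdS⟩ := Finset.mem_biUnion.mp (MvPolynomial.support_sum hd)
      rw [MvPolynomial.support_monomial, if_neg (hcne S)] at hdS
      rw [Finset.mem_singleton] at hdS
      exact Finset.mem_image.mpr ⟨S, Finset.mem_univ S, hdS.symm⟩
    · intro d hd
      obtain ⟨S, _, rfl⟩ := Finset.mem_image.mp hd
      rw [MvPolynomial.mem_support_iff, hcoeff]
      exact hcne S
  -- evaluation of g on the cube
  have hgeval : ∀ U : Finset (Fin n),
      eval (fun i => if i ∈ U then (1:F) else 0) g = a U := by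
    intro U
    rw [hg, map_sum]
    have hterm : ∀ S : Finset (Fin n),
        eval (fun i => if i ∈ U then (1:F) else 0) (monomial (indFinsupp S) (c S)) =
          if S ⊆ U then c S else 0 := by
      intro S
      rw [eval_monomial]
      have hprod : ((indFinsupp S).prod fun i e => (if i ∈ U then (1:F) else 0) ^ e) =
          ∏ i ∈ S, (if i ∈ U then (1:F) else 0) := by
        rw [Finsupp.prod]
        rw [indFinsupp_support]
        refine Finset.prod_congr rfl fun i hi => ?_
        rw [indFinsupp_apply, if_pos hi, pow_one]
      rw [hprod]
      by_cases hSU : S ⊆ U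
      · rw [if_pos hSU, Finset.prod_eq_one fun i hi => if_pos (hSU hi), mul_one]
      · obtain ⟨i, hiS, hiU⟩ := Finset.not_subset.mp hSU
        rw [if_neg hSU, Finset.prod_eq_zero hiS (by simp [hiU] : (if i ∈ U then (1:F) else 0) = 0), mul_zero]
    rw [Finset.sum_congr rfl fun S _ => hterm S, ← Finset.sum_filter]
    have hfil : Finset.univ.filter (fun S : Finset (Fin n) => S ⊆ U) = U.powerset := by
      ext S
      simp [Finset.mem_powerset]
    rw [hfil]
    exact aux_inv U a
  -- evaluation of f on the cube
  have hfeval : ∀ U : Finset (Fin n),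
      eval (fun i => if i ∈ U then (1:F) else 0) f = a U := by
    intro U
    rw [hagree _ (fun i => by by_cases h : i ∈ U <;> simp [h])]
    have hsum : (∑ i : Fin n, if i ∈ U then (1:F) else 0) = (U.card : F) := by
      rw [Finset.sum_ite_mem, Finset.univ_inter, Finset.sum_const, nsmul_eq_mul, mul_one]
    rw [hsum]
  -- conclude f = g
  have hfg : f = g := by
    have hsub : ∀ d ∈ (f - g).support, ∀ i, d i ≤ 1 := by
      intro d hd i
      rcases Finset.mem_union.mp (MvPolynomial.support_sub _ f g hd) with h | h
      · calc d i ≤ degreeOf i f := by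
              rw [degreeOf_eq_sup]
              exact Finset.le_sup (f := fun m => m i) h
          _ ≤ 1 := hml i
      · rw [hsuppg] at h
        obtain ⟨S, _, rfl⟩ := Finset.mem_image.mp h
        rw [indFinsupp_apply]
        split <;> omega
    have hev : ∀ U : Finset (Fin n),
        eval (fun i => if i ∈ U then (1:F) else 0) (f - g) = 0 := by
      intro U
      rw [map_sub, hfeval U, hgeval U, sub_self]
    exact sub_eq_zero.mp (ml_eq_zero (f - g) hsub hev)
  rw [hfg, hsuppg, Finset.card_image_of_injective _ indFinsupp_injective,
    Finset.card_univ, Fintype.card_finset, Fintype.card_fin]
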